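/- If s and t are noncommuting generators (m(s,t) = 3) of a Coxeter group W, and both s and t lie in the left descent set of w ∈ W, then w has a reduced expression beginning with sts; in particular w is not fully commutative. -/

import Mathlib

open Polynomial

/-- Bruhat order on a Coxeter group, via the subword property: `x ≤ w` iff some
reduced word for `w` has a subword whose product is `x`. -/
def BruhatLE {B W : Type*} {M : CoxeterMatrix B} [Group W] (cs : CoxeterSystem M W)
    (x w : W) : Prop :=
  ∃ ω : List B, cs.IsReduced ω ∧ cs.wordProd ω = w ∧
    ∃ ω' : List B, ω'.Sublist ω ∧ cs.wordProd ω' = x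

/-- Strict Bruhat order. -/
def BruhatLT {B W : Type*} {M : CoxeterMatrix B} [Group W] (cs : CoxeterSystem M W)
    (x w : W) : Prop :=
  BruhatLE cs x w ∧ x ≠ w

/-- `w` is fully commutative (Stembridge): no reduced expression for `w` contains a
factor `s t s` with `s, t` noncommuting generators with `m(s,t) = 3`. -/
def FullyCommutative {B W : Type*} {M : CoxeterMatrix B} [Group W] (cs : CoxeterSystem M W)
    (w : W) : Prop :=
  ∀ ω : List B, cs.IsReduced ω → cs.wordProd ω = w →
    ¬ ∃ (l₁ l₂ : List B) (i j : B), M i j = 3 ∧ ω = l₁ ++ [i, j, i] ++ l₂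

namespace StsAux

open Real


variable {B : Type*} (M : CoxeterMatrix B)

/-- The cosine matrix of the geometric representation. -/
noncomputable def geomC (k l : B) : ℝ :=
  if M k l = 0 then -1 else -Real.cos (Real.pi / (M k l))

lemma geomC_diag (k : B) : geomC M k k = 1 := by
  simp [geomC, M.diagonal k]

lemma geomC_symm (k l : B) : geomC M k l = geomC M l k := by
  simp [geomC, M.symmetric k l]

/-- Pairing against the `k`-th row of the cosine matrix. -/
noncomputable def geomP (k : B) : (B →₀ ℝ) →ₗ[ℝ] ℝ :=
  Finsupp.linearCombination ℝ (geomC M k)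

lemma geomP_single (k l : B) : geomP M k (Finsupp.single l 1) = geomC M k l := by
  simp [geomP]

/-- The geometric reflection attached to `k`. -/
noncomputable def geomS (k : B) : Module.End ℝ (B →₀ ℝ) :=
  LinearMap.id - (LinearMap.toSpanSingleton ℝ _ ((2:ℝ) • Finsupp.single k 1)) ∘ₗ geomP M k

lemma geomS_apply (k : B) (v : B →₀ ℝ) :
    geomS M k v = v - (2 * geomP M k v) • Finsupp.single k 1 := by
  simp [geomS, LinearMap.toSpanSingleton_apply, smul_smul, mul_comm]

lemma geomP_geomS (k l : B) (v : B →₀ ℝ) :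
    geomP M k (geomS M l v) = geomP M k v - 2 * geomP M l v * geomC M k l := by
  rw [geomS_apply, map_sub, map_smul, geomP_single, smul_eq_mul]

lemma geomS_liftable : M.IsLiftable (geomS M) := by
  intro k l
  rcases Nat.eq_zero_or_pos (M k l) with h0 | hpos
  · rw [h0, pow_zero]
  by_cases hkl : k = l
  · subst hkl
    rw [M.diagonal k, pow_one]
    apply LinearMap.ext
    intro v
    rw [Module.End.mul_apply, geomS_apply M k ((geomS M k) v), geomP_geomS, geomC_diag,
      geomS_apply, Module.End.one_apply]
    module
  · -- `k ≠ l`, `m := M k l ≥ 2`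
    have hm1 : M.M k l ≠ 1 := M.off_diagonal k l hkl
    have hm2 : 2 ≤ M.M k l := by omega
    set m : ℕ := M.M k l with hm
    have hmR : (1:ℝ) < (m:ℝ) := by exact_mod_cast hm2.trans_lt' (by norm_num)
    set θ : ℝ := Real.pi / m with hθ
    have hθpos : 0 < θ := div_pos Real.pi_pos (by positivity)
    have hθlt : θ < Real.pi := div_lt_self Real.pi_pos hmR
    have hst : 0 < Real.sin θ := Real.sin_pos_of_pos_of_lt_pi hθpos hθlt
    set st := Real.sin θ with hstdef
    set ct := Real.cos θ with hctdef
    have hpyth : st^2 + ct^2 = 1 := Real.sin_sq_add_cos_sq θ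
    have hckl : geomC M k l = -ct := by rw [geomC, if_neg (by omega)]
    have hclk : geomC M l k = -ct := by rw [geomC_symm]; exact hckl
    set e := Finsupp.single k (1:ℝ) with he
    set f := Finsupp.single l (1:ℝ) with hf
    have hpke : geomP M k e = 1 := by rw [he, geomP_single, geomC_diag]
    have hpkf : geomP M k f = -ct := by rw [hf, geomP_single]; exact hckl
    have hple : geomP M l e = -ct := by rw [he, geomP_single]; exact hclk
    have hplf : geomP M l f = 1 := by rw [hf, geomP_single, geomC_diag]
    set A := geomS M k * geomS M l with hA
    have hAe : A e = (4*ct^2-1) • e + (2*ct) • f := by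
      rw [hA, Module.End.mul_apply, geomS_apply M l e, hple, ← hf,
        geomS_apply M k _, map_sub, map_smul, hpke, hpkf, smul_eq_mul, ← he]
      module
    have hAf : A f = (-(2*ct)) • e + (-1:ℝ) • f := by
      rw [hA, Module.End.mul_apply, geomS_apply M l f, hplf, ← hf,
        geomS_apply M k _, map_sub, map_smul, hpkf, ← he]
      simp only [smul_eq_mul]
      module
    have key : ∀ n : ℕ, st • (A^n) e
          = Real.sin ((2*n+1)*θ) • e + Real.sin ((2*n)*θ) • f
        ∧ st • (A^n) f
          = (-Real.sin ((2*n)*θ)) • e + (-Real.sin ((2*n-1)*θ)) • f := by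
      intro n
      induction n with
      | zero =>
        constructor
        · norm_num; rfl
        · norm_num [Real.sin_neg]; rfl
      | succ n ih =>
        obtain ⟨ihe, ihf⟩ := ih
        have hc1 : Real.sin ((2*((n:ℝ)+1)+1)*θ)
            = (4*ct^2-1) * Real.sin ((2*(n:ℝ)+1)*θ) + 2*ct * (-Real.sin ((2*(n:ℝ))*θ)) := by
          rw [show (2*((n:ℝ)+1)+1)*θ = 2*(n:ℝ)*θ + (θ+θ+θ) by ring,
              show (2*(n:ℝ)+1)*θ = 2*(n:ℝ)*θ + θ by ring]
          simp only [Real.sin_add, Real.cos_add]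
          linear_combination (-(3*ct*Real.sin (2*(n:ℝ)*θ)) - st*Real.cos (2*(n:ℝ)*θ)) * hpyth
        have hc2 : Real.sin ((2*((n:ℝ)+1))*θ)
            = (4*ct^2-1) * Real.sin ((2*(n:ℝ))*θ) + 2*ct * (-Real.sin ((2*(n:ℝ)-1)*θ)) := by
          rw [show (2*((n:ℝ)+1))*θ = 2*(n:ℝ)*θ + (θ+θ) by ring,
              show (2*(n:ℝ)-1)*θ = 2*(n:ℝ)*θ - θ by ring]
          simp only [Real.sin_add, Real.cos_add, Real.sin_sub, Real.cos_sub]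
          linear_combination (-Real.sin (2*(n:ℝ)*θ)) * hpyth
        have hc3 : -Real.sin ((2*((n:ℝ)+1))*θ)
            = (-(2*ct)) * Real.sin ((2*(n:ℝ)+1)*θ) + (-1) * (-Real.sin ((2*(n:ℝ))*θ)) := by
          rw [show (2*((n:ℝ)+1))*θ = 2*(n:ℝ)*θ + (θ+θ) by ring,
              show (2*(n:ℝ)+1)*θ = 2*(n:ℝ)*θ + θ by ring]
          simp only [Real.sin_add, Real.cos_add]
          linear_combination (Real.sin (2*(n:ℝ)*θ)) * hpyth
        have hc4 : -Real.sin ((2*((n:ℝ)+1)-1)*θ)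
            = (-(2*ct)) * Real.sin ((2*(n:ℝ))*θ) + (-1) * (-Real.sin ((2*(n:ℝ)-1)*θ)) := by
          rw [show (2*((n:ℝ)+1)-1)*θ = 2*(n:ℝ)*θ + θ by ring,
              show (2*(n:ℝ)-1)*θ = 2*(n:ℝ)*θ - θ by ring]
          simp only [Real.sin_add, Real.sin_sub]
          ring
        constructor
        · rw [pow_succ, Module.End.mul_apply, hAe, map_add, map_smul, map_smul,
            smul_add, smul_comm st ((4:ℝ)*ct^2-1), smul_comm st ((2:ℝ)*ct), ihe, ihf]
          push_cast
          rw [hc1, hc2]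
          module
        · rw [pow_succ, Module.End.mul_apply, hAf, map_add, map_smul, map_smul,
            smul_add, smul_comm st (-((2:ℝ)*ct)), smul_comm st (-1:ℝ), ihe, ihf]
          push_cast
          rw [hc3, hc4]
          module
    have hm0R : (m:ℝ) ≠ 0 := by positivity
    have hang : ∀ r : ℝ, r * θ = r * Real.pi / m := by
      intro r; rw [hθ]; ring
    have h1 : (2*(m:ℝ)+1)*θ = θ + 2*Real.pi := by
      rw [hθ]; field_simp; ring
    have h2 : (2*(m:ℝ))*θ = 2*Real.pi := by
      rw [hθ]; field_simp
    have h3 : (2*(m:ℝ)-1)*θ = 2*Real.pi - θ := by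
      rw [hθ]; field_simp
    obtain ⟨hme, hmf⟩ := key m
    rw [h1, h2, Real.sin_add_two_pi, Real.sin_two_pi] at hme
    rw [h2, h3, Real.sin_two_pi, Real.sin_two_pi_sub] at hmf
    have hAme : (A^m) e = e := by
      apply smul_right_injective (B →₀ ℝ) hst.ne'
      simpa using hme
    have hAmf : (A^m) f = f := by
      apply smul_right_injective (B →₀ ℝ) hst.ne'
      simpa using hmf
    have hfix : ∀ v, geomP M k v = 0 → geomP M l v = 0 → (A^m) v = v := by
      intro v hk0 hl0
      have hAv : A v = v := by
        rw [hA, Module.End.mul_apply, geomS_apply M l v, hl0]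
        rw [show (2*(0:ℝ)) • Finsupp.single l (1:ℝ) = 0 by simp, sub_zero,
          geomS_apply M k v, hk0, show (2*(0:ℝ)) • Finsupp.single k (1:ℝ) = 0 by simp, sub_zero]
      clear hme hmf hAme hAmf
      induction m with
      | zero => simp
      | succ n ih =>
        rw [pow_succ, Module.End.mul_apply, hAv, ih]
    apply LinearMap.ext
    intro v
    have hd : st^2 ≠ 0 := by positivity
    set pk := geomP M k v with hpk
    set pl := geomP M l v with hpl
    set aa := (pk + ct*pl)/st^2 with haa
    set bb := (pl + ct*pk)/st^2 with hbb
    set z := v - aa • e - bb • f with hz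
    have hzk : geomP M k z = 0 := by
      rw [hz, map_sub, map_sub, map_smul, map_smul, hpke, hpkf, ← hpk,
        smul_eq_mul, smul_eq_mul, haa, hbb]
      field_simp
      linear_combination pk * hpyth
    have hzl : geomP M l z = 0 := by
      rw [hz, map_sub, map_sub, map_smul, map_smul, hple, hplf, ← hpl,
        smul_eq_mul, smul_eq_mul, haa, hbb]
      field_simp
      linear_combination pl * hpyth
    have hv : v = aa • e + bb • f + z := by rw [hz]; abel
    rw [Module.End.one_apply]
    calc (A^m) v = aa • ((A^m) e) + bb • ((A^m) f) + (A^m) z := by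
          rw [← map_smul, ← map_smul, ← map_add, ← map_add, ← hv]
      _ = v := by rw [hAme, hAmf, hfix z hzk hzl, ← hv]


theorem simple_ne {W : Type*} [Group W] (cs : CoxeterSystem M W) {i j : B}
    (hij : M i j = 3) : cs.simple i ≠ cs.simple j := by
  have hne : i ≠ j := by
    intro h; subst h; rw [M.diagonal] at hij; omega
  intro hss
  have h1 : geomS M i = geomS M j := by
    have ha := cs.lift_apply_simple (geomS_liftable M) i
    have hb := cs.lift_apply_simple (geomS_liftable M) j
    rw [← ha, ← hb, hss]
  have hL : (geomS M i (Finsupp.single j (1:ℝ))) j = 1 := by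
    rw [geomS_apply, geomP_single]
    simp [Finsupp.single_eq_of_ne hne.symm]
  have hR : (geomS M j (Finsupp.single j (1:ℝ))) j = -1 := by
    rw [geomS_apply, geomP_single, geomC_diag]
    simp
    norm_num
  rw [h1, hR] at hL
  norm_num at hL


open CoxeterSystem


open CoxeterSystem

variable {B : Type*} {W : Type*} [Group W] {M : CoxeterMatrix B} (cs : CoxeterSystem M W)

open scoped Classical in
/-- The permutation representation on `W × ZMod 2` used to prove the exchange property. -/
noncomputable def parityF (k : B) : Function.End (W × ZMod 2) :=
  fun p => (cs.simple k * p.1 * cs.simple k, p.2 + (if p.1 = cs.simple k then 1 else 0))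

lemma conj_eq_iff (g w y : W) : (g * w * g⁻¹ = y) ↔ (w = g⁻¹ * y * g) := by
  constructor
  · intro h; rw [← h]; group
  · intro h; rw [h]; group

open scoped Classical in
lemma parityF_pow (k l : B) (n : ℕ) (p : W × ZMod 2) :
    ((parityF cs k * parityF cs l)^n) p =
      ((cs.simple k * cs.simple l)^n * p.1 * ((cs.simple k * cs.simple l)^n)⁻¹,
       p.2 + ∑ r ∈ Finset.range (2*n),
        (if p.1 = (cs.simple l * cs.simple k)^r * cs.simple l then (1:ZMod 2) else 0)) := by
  set sk := cs.simple k with hsk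
  set sl := cs.simple l with hsl
  set a := sk * sl with ha
  set b := sl * sk with hb
  have hba : b = a⁻¹ := by
    rw [ha, hb, mul_inv_rev, hsk, hsl, cs.inv_simple, cs.inv_simple]
  have hsemi : ∀ m : ℕ, sl * a^m = b^m * sl := by
    intro m
    have h0 : SemiconjBy sl a b := (mul_assoc sl sk sl).symm
    exact (h0.pow_right m)
  have step : ∀ q : W × ZMod 2, (parityF cs k * parityF cs l) q
      = (a * q.1 * a⁻¹,
         q.2 + ((if q.1 = b^0 * sl then (1:ZMod 2) else 0)
           + (if q.1 = b^1 * sl then (1:ZMod 2) else 0))) := by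
    intro q
    show parityF cs k (parityF cs l q) = _
    rw [parityF, parityF]
    simp only [pow_zero, pow_one, one_mul]
    rw [Prod.mk.injEq]
    constructor
    · rw [ha, mul_inv_rev, hsk, hsl, cs.inv_simple, cs.inv_simple]
      group
    · have h1 : (sl * q.1 * sl = sk) ↔ (q.1 = b * sl) := by
        rw [hb]
        constructor
        · intro h; rw [← h, hsl]; simp [mul_assoc]
        · intro h; rw [h, hsl]; simp [mul_assoc]
      rw [if_congr h1 rfl rfl]
      ring
  induction n generalizing p with
  | zero => simp; rfl
  | succ n ih =>
    have hmain : ((parityF cs k * parityF cs l)^(n+1)) p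
        = (parityF cs k * parityF cs l) (((parityF cs k * parityF cs l)^n) p) := by
      rw [pow_succ']; rfl
    rw [hmain, ih, step]
    rw [Prod.mk.injEq]
    constructor
    · dsimp only
      group
    · dsimp only
      have hinv : (a^n)⁻¹ = b^n := by rw [hba, inv_pow]
      have hkey : ∀ m : ℕ, (a^n)⁻¹ * (b^m * sl) * a^n = b^(2*n+m) * sl := by
        intro m
        rw [hinv, mul_assoc, mul_assoc, hsemi n, ← mul_assoc, ← mul_assoc,
          ← pow_add, ← pow_add]
        congr 2
        omega
      have e1 : (a^n * p.1 * (a^n)⁻¹ = b^0 * sl) ↔ (p.1 = b^(2*n) * sl) := by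
        rw [conj_eq_iff, hkey 0, Nat.add_zero]
      have e2 : (a^n * p.1 * (a^n)⁻¹ = b^1 * sl) ↔ (p.1 = b^(2*n+1) * sl) := by
        rw [conj_eq_iff, hkey 1]
      rw [if_congr e1 rfl rfl, if_congr e2 rfl rfl,
        show 2*(n+1) = 2*n+1+1 by ring, Finset.sum_range_succ, Finset.sum_range_succ]
      ring

open scoped Classical in
lemma parityF_liftable : M.IsLiftable (parityF cs) := by
  intro k l
  funext p
  rw [show ((parityF cs k * parityF cs l)^(M k l)) p = _ from parityF_pow cs k l (M k l) p]
  have hfold : ∑ r ∈ Finset.range (2*(M k l)),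
      (if p.1 = (cs.simple l * cs.simple k)^r * cs.simple l then (1:ZMod 2) else 0) = 0 := by
    rw [two_mul, Finset.sum_range_add]
    have hb : ∀ r : ℕ, (cs.simple l * cs.simple k)^(M k l + r)
        = (cs.simple l * cs.simple k)^r := by
      intro r
      rw [pow_add, cs.simple_mul_simple_pow' k l, one_mul]
    have : ∀ r ∈ Finset.range (M k l),
        (if p.1 = (cs.simple l * cs.simple k)^(M k l + r) * cs.simple l then (1:ZMod 2) else 0)
        = (if p.1 = (cs.simple l * cs.simple k)^r * cs.simple l then (1:ZMod 2) else 0) := by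
      intro r _
      rw [hb r]
    rw [Finset.sum_congr rfl this]
    have h2 : ∀ x : ZMod 2, x + x = 0 := by decide
    exact h2 _
  rw [cs.simple_mul_simple_pow k l, hfold]
  show _ = p
  simp

/-- The lifted homomorphism. -/
noncomputable def parityHom : W →* Function.End (W × ZMod 2) :=
  cs.lift ⟨parityF cs, parityF_liftable cs⟩

open scoped Classical in
/-- Count (mod 2) of `t` in the left inversion sequence of `ω`. -/
noncomputable def invCount (ω : List B) (t : W) : ZMod 2 :=
  (((cs.leftInvSeq ω).count t : ℕ) : ZMod 2)

open scoped Classical in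
lemma parityHom_wordProd (ω : List B) (p : W × ZMod 2) :
    parityHom cs (cs.wordProd ω) p
      = (cs.wordProd ω * p.1 * (cs.wordProd ω)⁻¹,
         p.2 + invCount cs ω (cs.wordProd ω * p.1 * (cs.wordProd ω)⁻¹)) := by
  classical
  induction ω generalizing p with
  | nil =>
    simp only [wordProd_nil, map_one, invCount, leftInvSeq_nil, List.count_nil,
      Nat.cast_zero, add_zero, one_mul, inv_one, mul_one]
    rfl
  | cons k ω ih =>
    rw [cs.wordProd_cons, map_mul]
    have happ : (parityHom cs (cs.simple k) * parityHom cs (cs.wordProd ω)) p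
        = parityHom cs (cs.simple k) (parityHom cs (cs.wordProd ω) p) := rfl
    rw [happ, ih]
    have hψ : parityHom cs (cs.simple k) = parityF cs k :=
      cs.lift_apply_simple (parityF_liftable cs) k
    rw [hψ, parityF]
    rw [Prod.mk.injEq]
    constructor
    · dsimp only
      rw [mul_inv_rev, cs.inv_simple]
      group
    · dsimp only
      have hlis : cs.leftInvSeq (k :: ω)
          = cs.simple k :: List.map (⇑(MulAut.conj (cs.simple k))) (cs.leftInvSeq ω) := rfl
      have hconjeq : cs.simple k * cs.wordProd ω * p.1 * (cs.simple k * cs.wordProd ω)⁻¹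
          = (MulAut.conj (cs.simple k)) (cs.wordProd ω * p.1 * (cs.wordProd ω)⁻¹) := by
        rw [MulAut.conj_apply, mul_inv_rev, cs.inv_simple]
        group
      have hfix : (MulAut.conj (cs.simple k)) (cs.simple k) = cs.simple k := by
        simp
      have hif : ((MulAut.conj (cs.simple k)) (cs.wordProd ω * p.1 * (cs.wordProd ω)⁻¹)
            = cs.simple k)
          ↔ (cs.wordProd ω * p.1 * (cs.wordProd ω)⁻¹ = cs.simple k) := by
        constructor
        · intro h
          exact (MulAut.conj (cs.simple k)).injective (h.trans hfix.symm)
        · intro h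
          rw [h]; exact hfix
      simp only [invCount, hlis, hconjeq, List.count_cons,
        List.count_map_of_injective _ _ (MulAut.conj (cs.simple k)).injective,
        if_congr hif rfl rfl]
      push_cast
      simp only [beq_iff_eq]
      rw [if_congr (eq_comm.trans hif) rfl rfl]
      ring

open scoped Classical in
lemma invCount_eq_of_wordProd_eq {ω₁ ω₂ : List B} (h : cs.wordProd ω₁ = cs.wordProd ω₂)
    (t : W) : invCount cs ω₁ t = invCount cs ω₂ t := by
  have e1 := parityHom_wordProd cs ω₁ ((cs.wordProd ω₁)⁻¹ * t * cs.wordProd ω₁, (0:ZMod 2))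
  have e2 := parityHom_wordProd cs ω₂ ((cs.wordProd ω₁)⁻¹ * t * cs.wordProd ω₁, (0:ZMod 2))
  rw [← h] at e2
  have e3 := e1.symm.trans e2
  have harg : cs.wordProd ω₁ * ((cs.wordProd ω₁)⁻¹ * t * cs.wordProd ω₁)
      * (cs.wordProd ω₁)⁻¹ = t := by group
  rw [harg] at e3
  have := congrArg Prod.snd e3
  simpa using this

open scoped Classical in
lemma simple_mem_leftInvSeq_of_isLeftDescent {ω : List B} (hred : cs.IsReduced ω) {i : B}
    (hd : cs.IsLeftDescent (cs.wordProd ω) i) : cs.simple i ∈ cs.leftInvSeq ω := by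
  obtain ⟨α, hαred, hαprod⟩ := cs.exists_reduced_word' (cs.simple i * cs.wordProd ω)
  have hprod : cs.wordProd (i :: α) = cs.wordProd ω := by
    rw [cs.wordProd_cons, ← hαprod, cs.simple_mul_simple_cancel_left]
  have hcount0 : List.count (cs.simple i) (cs.leftInvSeq α) = 0 := by
    rw [List.count_eq_zero]
    intro hmem
    have hinv := cs.isLeftInversion_of_mem_leftInvSeq hαred hmem
    rw [← hαprod] at hinv
    have h2 := hinv.2
    rw [cs.simple_mul_simple_cancel_left] at h2
    exact lt_asymm hd h2
  have h1 : invCount cs ω (cs.simple i) = invCount cs (i :: α) (cs.simple i) :=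
    invCount_eq_of_wordProd_eq cs hprod.symm _
  have hlis : cs.leftInvSeq (i::α)
      = cs.simple i :: List.map (⇑(MulAut.conj (cs.simple i))) (cs.leftInvSeq α) := rfl
  have hfix : (MulAut.conj (cs.simple i)) (cs.simple i) = cs.simple i := by simp
  have hmap : List.count (cs.simple i)
      (List.map (⇑(MulAut.conj (cs.simple i))) (cs.leftInvSeq α)) = 0 := by
    have hcm := List.count_map_of_injective (cs.leftInvSeq α) (⇑(MulAut.conj (cs.simple i)))
      (MulAut.conj (cs.simple i)).injective (cs.simple i)
    rw [hfix] at hcm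
    rw [hcm, hcount0]
  have hcnt : List.count (cs.simple i) (cs.leftInvSeq (i::α)) = 1 := by
    rw [hlis, List.count_cons, hmap]
    simp
  have h2 : invCount cs (i::α) (cs.simple i) = 1 := by
    rw [invCount, hcnt]; norm_num
  rw [h2] at h1
  by_contra hmem
  rw [invCount, List.count_eq_zero.mpr hmem] at h1
  simp at h1

open scoped Classical in
lemma exists_eraseIdx_of_isLeftDescent {ω : List B} (hred : cs.IsReduced ω) {i : B}
    (hd : cs.IsLeftDescent (cs.wordProd ω) i) :
    ∃ k, k < ω.length ∧ cs.simple i * cs.wordProd ω = cs.wordProd (ω.eraseIdx k) := by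
  have hmem := simple_mem_leftInvSeq_of_isLeftDescent cs hred hd
  obtain ⟨k, hk, hget⟩ := List.getElem_of_mem hmem
  refine ⟨k, ?_, ?_⟩
  · rw [← cs.length_leftInvSeq ω]; exact hk
  · have hthis := cs.getD_leftInvSeq_mul_wordProd ω k
    rw [List.getD_eq_getElem _ _ hk, hget] at hthis
    exact hthis

lemma descent_length_eq {w : W} {i : B} (hi : cs.IsLeftDescent w i) :
    cs.length (cs.simple i * w) + 1 = cs.length w := by
  have hi' : cs.length (cs.simple i * w) < cs.length w := hi
  rcases cs.length_simple_mul w i with h | h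
  · omega
  · exact h

/-- If `i ≠ j` (as simple reflections) are both left descents of `w`, then
`ℓ(sⱼ sᵢ w) = ℓ(w) - 2`. -/
lemma length_two_descents {w : W} {i j : B} (hsne : cs.simple i ≠ cs.simple j)
    (hi : cs.IsLeftDescent w i) (hj : cs.IsLeftDescent w j) :
    cs.length (cs.simple j * (cs.simple i * w)) + 2 = cs.length w := by
  have hdi := descent_length_eq cs hi
  have hdj := descent_length_eq cs hj
  obtain ⟨α, hαred, hαprod⟩ := cs.exists_reduced_word' (cs.simple j * w)
  have hωprod : cs.wordProd (j :: α) = w := by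
    rw [cs.wordProd_cons, ← hαprod, cs.simple_mul_simple_cancel_left]
  have hαlen : α.length + 1 = cs.length w := by
    have : cs.length (cs.wordProd α) = α.length := hαred
    rw [← hαprod] at this
    omega
  have hωred : cs.IsReduced (j :: α) := by
    show cs.length (cs.wordProd (j :: α)) = (j :: α).length
    rw [hωprod, List.length_cons]
    omega
  have hd' : cs.IsLeftDescent (cs.wordProd (j :: α)) i := by rw [hωprod]; exact hi
  obtain ⟨k, hk, hke⟩ := exists_eraseIdx_of_isLeftDescent cs hωred hd'
  rw [hωprod] at hke
  match k, hk with
  | 0, hk =>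
    rw [List.eraseIdx_cons_zero, ← hαprod] at hke
    exact absurd (mul_right_cancel hke) hsne
  | (k+1), hk =>
    rw [List.eraseIdx_cons_succ, cs.wordProd_cons] at hke
    have h3 : cs.simple j * (cs.simple i * w) = cs.wordProd (α.eraseIdx k) := by
      rw [hke, cs.simple_mul_simple_cancel_left]
    have hklt : k < α.length := by
      rw [List.length_cons] at hk; omega
    have helen : (α.eraseIdx k).length + 1 = α.length :=
      List.length_eraseIdx_add_one hklt
    have hub : cs.length (cs.simple j * (cs.simple i * w)) ≤ (α.eraseIdx k).length := by
      rw [h3]; exact cs.length_wordProd_le _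
    have hlb := cs.length_simple_mul (cs.simple i * w) j
    rcases hlb with h | h <;> omega

/-- The key length computation: if `m(i,j) = 3` and `i, j` are both left descents of `w`,
then `ℓ(sᵢ sⱼ sᵢ w) = ℓ(w) - 3`. -/
lemma length_three_descents {w : W} {i j : B} (hij : M i j = 3)
    (hsne : cs.simple i ≠ cs.simple j)
    (hi : cs.IsLeftDescent w i) (hj : cs.IsLeftDescent w j) :
    cs.length (cs.simple i * (cs.simple j * (cs.simple i * w))) + 3 = cs.length w := by
  have hbraid : cs.simple i * cs.simple j * cs.simple i
      = cs.simple j * cs.simple i * cs.simple j := by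
    have h := cs.simple_mul_simple_pow i j
    rw [hij] at h
    have h2 : cs.simple i * cs.simple j * cs.simple i * (cs.simple j * cs.simple i * cs.simple j)
        = 1 := by
      rw [show cs.simple i * cs.simple j * cs.simple i
          * (cs.simple j * cs.simple i * cs.simple j)
          = (cs.simple i * cs.simple j)^3 by simp [pow_succ, mul_assoc]]
      exact h
    have h4 : (cs.simple j * cs.simple i * cs.simple j)
        * (cs.simple j * cs.simple i * cs.simple j) = 1 := by
      simp [mul_assoc]
    calc cs.simple i * cs.simple j * cs.simple i
        = cs.simple i * cs.simple j * cs.simple i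
          * ((cs.simple j * cs.simple i * cs.simple j)
            * (cs.simple j * cs.simple i * cs.simple j)) := by rw [h4, mul_one]
      _ = (cs.simple i * cs.simple j * cs.simple i
          * (cs.simple j * cs.simple i * cs.simple j))
            * (cs.simple j * cs.simple i * cs.simple j) := by group
      _ = cs.simple j * cs.simple i * cs.simple j := by rw [h2, one_mul]
  have hdi := descent_length_eq cs hi
  have hdj := descent_length_eq cs hj
  have h2ji := length_two_descents cs hsne hi hj
  have h2ij := length_two_descents cs (Ne.symm hsne) hj hi
  -- ℓ(sⱼ sᵢ w) + 2 = ℓ w and ℓ(sᵢ sⱼ w) + 2 = ℓ w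
  rcases cs.length_simple_mul (cs.simple j * (cs.simple i * w)) i with h | h
  · -- ascent case: derive a contradiction
    exfalso
    set x := cs.simple i * (cs.simple j * (cs.simple i * w)) with hx
    have hxi : cs.IsLeftDescent x i := by
      show cs.length (cs.simple i * x) < cs.length x
      have hcan : cs.simple i * x = cs.simple j * (cs.simple i * w) := by
        rw [hx, cs.simple_mul_simple_cancel_left]
      rw [hcan]
      omega
    have hxw : x = cs.simple j * (cs.simple i * (cs.simple j * w)) := by
      rw [hx, show cs.simple i * (cs.simple j * (cs.simple i * w))
        = cs.simple i * cs.simple j * cs.simple i * w by group, hbraid]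
      group
    have hxj : cs.IsLeftDescent x j := by
      show cs.length (cs.simple j * x) < cs.length x
      have hcan : cs.simple j * x = cs.simple i * (cs.simple j * w) := by
        rw [hxw, cs.simple_mul_simple_cancel_left]
      rw [hcan]
      omega
    have h2x := length_two_descents cs (Ne.symm hsne) hxj hxi
    -- sᵢ (sⱼ x) = sⱼ w
    have hxx : cs.simple i * (cs.simple j * x) = cs.simple j * w := by
      rw [hxw]
      simp only [cs.simple_mul_simple_cancel_left]
    rw [hxx] at h2x
    omega
  · omega


end StsAux

/-- If `s = sᵢ` and `t = sⱼ` are noncommuting generators with `m(s,t) = 3` and both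
are left descents of `w`, then `w` has a reduced expression beginning with `s t s`;
in particular `w` is not fully commutative. -/
theorem reduced_word_starts_sts_of_descents
    {B W : Type*} {M : CoxeterMatrix B} [Group W] (cs : CoxeterSystem M W)
    (i j : B) (hij : M i j = 3) (w : W)
    (hi : cs.IsLeftDescent w i) (hj : cs.IsLeftDescent w j) :
    (∃ ω : List B, cs.IsReduced (i :: j :: i :: ω) ∧ cs.wordProd (i :: j :: i :: ω) = w) ∧
      ¬ FullyCommutative cs w := by
  have hsne : cs.simple i ≠ cs.simple j := StsAux.simple_ne M cs hij
  have h3 := StsAux.length_three_descents cs hij hsne hi hj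
  obtain ⟨β, hβred, hβprod⟩ :=
    cs.exists_reduced_word' (cs.simple i * (cs.simple j * (cs.simple i * w)))
  have hprod : cs.wordProd (i :: j :: i :: β) = w := by
    rw [cs.wordProd_cons, cs.wordProd_cons, cs.wordProd_cons, ← hβprod]
    simp only [cs.simple_mul_simple_cancel_left]
  have hred : cs.IsReduced (i :: j :: i :: β) := by
    show cs.length (cs.wordProd (i :: j :: i :: β)) = (i :: j :: i :: β).length
    rw [hprod]
    simp only [List.length_cons]
    have hb : cs.length (cs.wordProd β) = β.length := hβred
    rw [← hβprod] at hb
    omega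
  refine ⟨⟨β, hred, hprod⟩, ?_⟩
  intro hFC
  exact hFC (i :: j :: i :: β) hred hprod ⟨[], β, i, j, hij, rfl⟩
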